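/- arXiv:2102.11974 — 3 statements merged into one kernel-verified Lean document; each statement's English description precedes it below -/
import Mathlib

section
/- Let G be a finite connected simple graph on a vertex set V with at least two vertices and a distinguished sink vertex s ∈ V, and let z : V → ℕ be a sandpile configuration. If L₁ and L₂ are two complete legal toppling sequences (with sink s) from z, then the final configurations obtained by performing the topplings of L₁ and of L₂ coincide: the stable configuration reached depends solely on the initial configuration, independently of the order in which the topplings are performed (Abelian property). -/
variable {V : Type*}

/-- The toppling operator: the unstable vertex `i` sends one particle to each of
its neighbours, losing `deg i` particles itself. -/
def topple (G : SimpleGraph V) [G.LocallyFinite] [DecidableEq V] [DecidableRel G.Adj]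
    (z : V → ℕ) (i : V) : V → ℕ :=
  fun j => if j = i then z i - G.degree i else if G.Adj i j then z j + 1 else z j

/-- A legal toppling sequence (with sink `s`) from `z`: every toppled vertex is
different from `s` and is unstable in the configuration reached so far. -/
def LegalSeq (G : SimpleGraph V) [G.LocallyFinite] [DecidableEq V] [DecidableRel G.Adj]
    (s : V) : (V → ℕ) → List V → Prop
  | _, [] => True
  | z, i :: L => i ≠ s ∧ G.degree i ≤ z i ∧ LegalSeq G s (topple G z i) L

section Aux

variable [Fintype V] [DecidableEq V] (G : SimpleGraph V) [DecidableRel G.Adj]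

lemma le_topple (z : V → ℕ) {i j : V} (h : i ≠ j) : z i ≤ topple G z j i := by
  simp only [topple, if_neg h]
  split_ifs <;> omega

lemma topple_comm (z : V → ℕ) {i j : V} (hij : i ≠ j)
    (hi : G.degree i ≤ z i) (hj : G.degree j ≤ z j) :
    topple G (topple G z i) j = topple G (topple G z j) i := by
  funext k
  by_cases hki : k = i
  · subst hki
    simp only [topple]
    simp [hij, hij.symm]
    split_ifs <;> omega
  · by_cases hkj : k = j
    · subst hkj
      simp only [topple]
      simp [hij, hij.symm]
      split_ifs <;> omega
    · simp only [topple]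
      simp [hki, hkj]
      split_ifs <;> omega

lemma le_foldl (z : V → ℕ) (i : V) (L : List V) (h : i ∉ L) :
    z i ≤ (L.foldl (topple G) z) i := by
  induction L generalizing z with
  | nil => simp
  | cons j M ih =>
    simp only [List.foldl_cons]
    refine le_trans (le_topple G z ?_) (ih _ ?_)
    · rintro rfl; exact h List.mem_cons_self
    · intro hm; exact h (List.mem_cons_of_mem _ hm)

lemma legal_move_front {s : V} (z : V → ℕ) (i : V) (L : List V)
    (hL : LegalSeq G s z L) (his : i ≠ s) (hi : G.degree i ≤ z i) (hmem : i ∈ L) :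
    LegalSeq G s z (i :: L.erase i) ∧
      (i :: L.erase i).foldl (topple G) z = L.foldl (topple G) z := by
  induction L generalizing z with
  | nil => simp at hmem
  | cons j M ih =>
    by_cases hji : j = i
    · subst hji
      simpa using hL
    · obtain ⟨hjs, hjz, hM⟩ := hL
      have hmem' : i ∈ M := by
        rcases List.mem_cons.1 hmem with h | h
        · exact absurd h.symm hji
        · exact h
      have hi' : G.degree i ≤ topple G z j i :=
        le_trans hi (le_topple G z (Ne.symm hji))
      obtain ⟨hleg, hfold⟩ := ih (topple G z j) hM hi' hmem'
      obtain ⟨-, -, hrest⟩ := hleg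
      have hij : i ≠ j := Ne.symm hji
      have hcomm := topple_comm G z hij hi hjz
      have herase : (j :: M).erase i = j :: M.erase i :=
        List.erase_cons_tail (by simpa using hji)
      constructor
      · rw [herase]
        refine ⟨his, hi, hjs, le_trans hjz (le_topple G z hji), ?_⟩
        rwa [hcomm]
      · rw [herase]
        simp only [List.foldl_cons] at hfold ⊢
        rw [hcomm]
        exact hfold

lemma mem_of_unstable {s : V} (z : V → ℕ) (i : V) (L : List V)
    (his : i ≠ s) (hi : G.degree i ≤ z i)
    (hc : ∀ v, v ≠ s → L.foldl (topple G) z v < G.degree v) : i ∈ L := by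
  by_contra h
  exact absurd (le_trans hi (le_foldl G z i L h)) (not_le.2 (hc i his))

end Aux

/-- Abelian property: on a finite connected simple graph with at least two
vertices and a sink `s`, any two complete legal toppling sequences from the same
initial configuration produce the same final stable configuration. -/
theorem abelian_final_config [Fintype V] [DecidableEq V]
    (G : SimpleGraph V) [DecidableRel G.Adj]
    (hconn : G.Connected) (hcard : 1 < Fintype.card V) (s : V)
    (z : V → ℕ) (L₁ L₂ : List V)
    (h₁ : LegalSeq G s z L₁) (h₂ : LegalSeq G s z L₂)
    (hc₁ : ∀ v, v ≠ s → L₁.foldl (topple G) z v < G.degree v)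
    (hc₂ : ∀ v, v ≠ s → L₂.foldl (topple G) z v < G.degree v) :
    L₁.foldl (topple G) z = L₂.foldl (topple G) z := by
  induction L₁ generalizing z L₂ with
  | nil =>
    cases L₂ with
    | nil => rfl
    | cons j M =>
      obtain ⟨hjs, hjz, -⟩ := h₂
      exact absurd hjz (not_le.2 (hc₁ j hjs))
  | cons i M₁ ih =>
    obtain ⟨his, hiz, hM₁⟩ := h₁
    have hmem : i ∈ L₂ := mem_of_unstable G z i L₂ his hiz hc₂
    obtain ⟨hleg, hfold⟩ := legal_move_front G z i L₂ h₂ his hiz hmem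
    obtain ⟨-, -, hrest⟩ := hleg
    simp only [List.foldl_cons] at hfold ⊢
    rw [← hfold]
    simp only [List.foldl_cons] at hc₁
    exact ih (topple G z i) (L₂.erase i) hM₁ hrest hc₁
      (fun v hv => by rw [hfold]; exact hc₂ v hv)
end

section
/- Let G be a finite connected simple graph on a vertex set V with at least two vertices and a distinguished sink vertex s ∈ V. Then for every sandpile configuration z : V → ℕ there is no infinite legal toppling sequence (with sink s) from z; consequently, every configuration stabilizes after a finite number of topplings, i.e., there exists a complete legal toppling sequence from z whose final configuration is stable at every vertex other than s. -/
variable {V : Type*}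

/-- The configuration obtained from `z` after performing the first `n` topplings
of the infinite sequence of vertices `f`. -/
def confSeq (G : SimpleGraph V) [G.LocallyFinite] [DecidableEq V] [DecidableRel G.Adj]
    (z : V → ℕ) (f : ℕ → V) : ℕ → V → ℕ
  | 0 => z
  | n + 1 => topple G (confSeq G z f n) (f n)

section Aux
variable [Fintype V] [DecidableEq V] (G : SimpleGraph V) [DecidableRel G.Adj]

/-- key sum identity -/
lemma sum_topple_key (A : Finset V) (z : V → ℕ) (i : V) (hi : i ∈ A)
    (hz : G.degree i ≤ z i) :
    ∑ v ∈ A, topple G z i v + G.degree i = ∑ v ∈ A, z v + (A ∩ G.neighborFinset i).card := by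
  classical
  have h1 : ∑ v ∈ A.erase i, topple G z i v + topple G z i i = ∑ v ∈ A, topple G z i v :=
    Finset.sum_erase_add A _ hi
  have h2 : ∑ v ∈ A.erase i, z v + z i = ∑ v ∈ A, z v := Finset.sum_erase_add A _ hi
  have h3 : topple G z i i = z i - G.degree i := by simp [topple]
  have h4 : ∀ v ∈ A.erase i, topple G z i v
      = z v + (if v ∈ G.neighborFinset i then 1 else 0) := by
    intro v hv
    have hne : v ≠ i := Finset.ne_of_mem_erase hv
    simp only [topple, hne, if_neg hne, SimpleGraph.mem_neighborFinset]
    by_cases h : G.Adj i v <;> simp [h]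
  have h5 : ∑ v ∈ A.erase i, topple G z i v
      = ∑ v ∈ A.erase i, z v + (A ∩ G.neighborFinset i).card := by
    rw [Finset.sum_congr rfl h4, Finset.sum_add_distrib]
    congr 1
    rw [Finset.sum_ite_mem]
    have : A.erase i ∩ G.neighborFinset i = A ∩ G.neighborFinset i := by
      ext v
      simp only [Finset.mem_inter, Finset.mem_erase, SimpleGraph.mem_neighborFinset]
      constructor
      · rintro ⟨⟨_, h⟩, h'⟩; exact ⟨h, h'⟩
      · rintro ⟨h, h'⟩; exact ⟨⟨fun he => G.irrefl (he ▸ h'), h⟩, h'⟩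
    rw [this, Finset.sum_const, smul_eq_mul, mul_one]
  omega

/-- crossing lemma -/
lemma cross (P : V → Prop) : ∀ {u v : V}, G.Walk u v → P u → ¬ P v →
    ∃ a b, P a ∧ ¬ P b ∧ G.Adj a b := by
  intro u v p
  induction p with
  | nil => intro h h'; exact absurd h h'
  | @cons x y w hadj p ih =>
    intro hx hw
    by_cases hy : P y
    · exact ih hy hw
    · exact ⟨x, y, hx, hy, hadj⟩

lemma no_inf_decr (g : ℕ → ℕ) (N : ℕ) (h1 : ∀ k, N ≤ k → g (k + 1) ≤ g k)
    (h2 : ∀ M, ∃ k, M ≤ k ∧ N ≤ k ∧ g (k + 1) < g k) : False := by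
  have mono : ∀ m n, N ≤ m → m ≤ n → g n ≤ g m := by
    intro m n hm hmn
    induction n, hmn using Nat.le_induction with
    | base => exact le_rfl
    | succ n hn ih => exact le_trans (h1 n (le_trans hm hn)) ih
  have key : ∀ c n, N ≤ n → g n ≤ c → False := by
    intro c
    induction c with
    | zero =>
      intro n hn hg
      obtain ⟨k, hk, hNk, hlt⟩ := h2 n
      have := mono n k hn hk
      omega
    | succ c ih =>
      intro n hn hg
      obtain ⟨k, hk, hNk, hlt⟩ := h2 n
      have := mono n k hn hk
      exact ih (k + 1) (by omega) (by omega)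
  exact key (g N) N le_rfl le_rfl

/-- No infinite legal sequence, for every starting configuration. -/
lemma no_infinite (hconn : G.Connected) (s : V) (z : V → ℕ) :
    ¬ ∃ f : ℕ → V, ∀ k, f k ≠ s ∧ G.degree (f k) ≤ confSeq G z f k (f k) := by
  classical
  rintro ⟨f, hf⟩
  set AF : Finset V := Finset.univ.filter (fun v => {k | f k = v}.Infinite) with hAFdef
  have hmemAF : ∀ v, v ∈ AF ↔ {k | f k = v}.Infinite := by
    intro v; simp [hAFdef]
  -- AF nonempty
  obtain ⟨v0, hv0⟩ : ∃ y, Set.Infinite {k | f k = y} := by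
    obtain ⟨y, hy⟩ := Finite.exists_infinite_fiber f
    exact ⟨y, Set.infinite_coe_iff.mp hy⟩
  have hv0AF : v0 ∈ AF := (hmemAF v0).mpr hv0
  -- s ∉ AF
  have hsAF : s ∉ AF := by
    rw [hmemAF]
    intro h
    have : {k | f k = s} = ∅ := by
      ext k; simp [(hf k).1]
    rw [this] at h
    exact h Set.finite_empty
  -- boundary edge
  obtain ⟨a, b, haAF, hbAF, hab⟩ :=
    cross G (fun v => v ∈ AF) ((hconn.preconnected v0 s).some) hv0AF hsAF
  -- bound N after which all toppled vertices lie in AF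
  have hBfin : {k | f k ∉ AF}.Finite := by
    have hsub : {k | f k ∉ AF} ⊆ ⋃ v ∈ {v : V | v ∉ AF}, {k | f k = v} := by
      intro k hk
      exact Set.mem_biUnion hk rfl
    refine Set.Finite.subset (Set.Finite.biUnion (Set.toFinite _) ?_) hsub
    intro v hv
    have : ¬ {k | f k = v}.Infinite := fun h => hv ((hmemAF v).mpr h)
    exact Set.not_infinite.mp this
  obtain ⟨N0, hN0⟩ := hBfin.bddAbove
  set N := N0 + 1 with hNdef
  have hNin : ∀ k, N ≤ k → f k ∈ AF := by
    intro k hk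
    by_contra h
    have := hN0 h
    omega
  -- the decreasing quantity
  set g : ℕ → ℕ := fun n => ∑ v ∈ AF, confSeq G z f n v with hgdef
  have hstep : ∀ k, N ≤ k →
      g (k + 1) + G.degree (f k) = g k + (AF ∩ G.neighborFinset (f k)).card := by
    intro k hk
    have : confSeq G z f (k + 1) = topple G (confSeq G z f k) (f k) := rfl
    simp only [hgdef, this]
    exact sum_topple_key G AF _ (f k) (hNin k hk) (hf k).2
  have h1 : ∀ k, N ≤ k → g (k + 1) ≤ g k := by
    intro k hk
    have := hstep k hk
    have hc : (AF ∩ G.neighborFinset (f k)).card ≤ G.degree (f k) :=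
      Finset.card_le_card (Finset.inter_subset_right)
    omega
  have h2 : ∀ M, ∃ k, M ≤ k ∧ N ≤ k ∧ g (k + 1) < g k := by
    intro M
    obtain ⟨k, hk, hMk⟩ := ((hmemAF a).mp haAF).exists_gt (max M N)
    have hMk' : M ≤ k := le_trans (le_max_left _ _) (le_of_lt hMk)
    have hNk : N ≤ k := le_trans (le_max_right _ _) (le_of_lt hMk)
    refine ⟨k, hMk', hNk, ?_⟩
    have hfk : f k = a := hk
    have hcard : (AF ∩ G.neighborFinset (f k)).card < G.degree (f k) := by
      rw [hfk]
      apply Finset.card_lt_card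
      constructor
      · exact Finset.inter_subset_right
      · intro hsub
        have : b ∈ AF ∩ G.neighborFinset a :=
          hsub (by rwa [SimpleGraph.mem_neighborFinset])
        exact hbAF (Finset.mem_inter.mp this).1
    have := hstep k hNk
    omega
  exact no_inf_decr g N h1 h2

end Aux

section Aux2
variable [Fintype V] [DecidableEq V] (G : SimpleGraph V) [DecidableRel G.Adj]

lemma acc_all (hconn : G.Connected) (s : V) (z : V → ℕ) :
    Acc (fun z' z => ∃ i, i ≠ s ∧ G.degree i ≤ z i ∧ z' = topple G z i) z := by
  classical
  set R : (V → ℕ) → (V → ℕ) → Prop :=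
    fun z' z => ∃ i, i ≠ s ∧ G.degree i ≤ z i ∧ z' = topple G z i with hR
  by_contra hacc
  have step : ∀ c : {c : V → ℕ // ¬ Acc R c}, ∃ d : {c : V → ℕ // ¬ Acc R c}, R d.1 c.1 := by
    rintro ⟨c, hc⟩
    by_contra hall
    push_neg at hall
    apply hc
    constructor
    intro y hy
    by_contra hy'
    exact hall ⟨y, hy'⟩ hy
  choose F hF using step
  set seq : ℕ → {c : V → ℕ // ¬ Acc R c} := fun n => F^[n] ⟨z, hacc⟩ with hseqdef
  have hseq : ∀ n, R (seq (n + 1)).1 (seq n).1 := by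
    intro n
    have h : seq (n + 1) = F (seq n) := Function.iterate_succ_apply' F n _
    rw [h]
    exact hF (seq n)
  choose i hi1 hi2 hi3 using hseq
  have hconf : ∀ n, confSeq G z i n = (seq n).1 := by
    intro n
    induction n with
    | zero => rfl
    | succ n ih =>
      have : confSeq G z i (n + 1) = topple G (confSeq G z i n) (i n) := rfl
      rw [this, ih, ← hi3 n]
  exact no_infinite G hconn s z ⟨i, fun k => ⟨hi1 k, by rw [hconf k]; exact hi2 k⟩⟩

end Aux2


/-- On a finite connected simple graph with at least two vertices and a sink `s`,
there is no infinite legal toppling sequence from any configuration `z`;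
consequently every configuration stabilizes after finitely many topplings: there
is a complete legal toppling sequence from `z` whose final configuration is
stable at every vertex other than `s`. -/
theorem stabilization [Fintype V] [DecidableEq V]
    (G : SimpleGraph V) [DecidableRel G.Adj]
    (hconn : G.Connected) (hcard : 1 < Fintype.card V) (s : V) (z : V → ℕ) :
    (¬ ∃ f : ℕ → V, ∀ k, f k ≠ s ∧ G.degree (f k) ≤ confSeq G z f k (f k)) ∧
    (∃ L : List V, LegalSeq G s z L ∧
      ∀ v, v ≠ s → L.foldl (topple G) z v < G.degree v) := by
  refine ⟨no_infinite G hconn s z, ?_⟩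
  have hacc := acc_all G hconn s z
  induction hacc with
  | intro z hz ih =>
    by_cases hex : ∃ v, v ≠ s ∧ G.degree v ≤ z v
    · obtain ⟨v, hv, hd⟩ := hex
      obtain ⟨L, hL, hst⟩ := ih (topple G z v) ⟨v, hv, hd, rfl⟩
      exact ⟨v :: L, ⟨hv, hd, hL⟩, fun w hw => by simpa using hst w hw⟩
    · push_neg at hex
      exact ⟨[], trivial, fun v hv => hex v hv⟩
end

section
/- Let G be an infinite, connected, locally finite simple graph on a vertex set V, and let z : V → ℕ be a sandpile configuration with finite support (a finite number of particles). Then every legal toppling sequence from z is finite: all vertices become stable after a finite number of topplings. -/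
variable {V : Type*}

section SandpileAux

variable (G : SimpleGraph V) [G.LocallyFinite] [DecidableEq V] [DecidableRel G.Adj]

/-- number of firings of `u` strictly before time `t` -/
private def nfire (f : ℕ → V) (t : ℕ) (u : V) : ℕ :=
  ((Finset.range t).filter fun k => f k = u).card

/-- number of particle arrivals at `u` strictly before time `t` -/
private def arrs (f : ℕ → V) (t : ℕ) (u : V) : ℕ :=
  ((Finset.range t).filter fun k => G.Adj (f k) u).card

private lemma confSeq_succ (z : V → ℕ) (f : ℕ → V) (t : ℕ) :
    confSeq G z f (t + 1) = topple G (confSeq G z f t) (f t) := rfl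

private lemma step_balance (w : V → ℕ) (i u : V) (hleg : G.degree i ≤ w i) :
    topple G w i u + (if i = u then G.degree u else 0)
      = w u + (if G.Adj i u then 1 else 0) := by
  by_cases h : u = i
  · subst h
    show (if u = u then w u - G.degree u else _) + _ = _
    rw [if_pos rfl, if_pos rfl, if_neg (G.irrefl), Nat.sub_add_cancel hleg, add_zero]
  · show (if u = i then w i - G.degree i else if G.Adj i u then w u + 1 else w u) + _ = _
    rw [if_neg h]
    rw [if_neg (show ¬ i = u from fun hh => h hh.symm)]
    rw [add_zero]
    by_cases ha : G.Adj i u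
    · rw [if_pos ha, if_pos ha]
    · rw [if_neg ha, if_neg ha, Nat.add_zero]

private lemma balance (z : V → ℕ) (f : ℕ → V)
    (hleg : ∀ k, G.degree (f k) ≤ confSeq G z f k (f k)) (u : V) :
    ∀ t, confSeq G z f t u + G.degree u * nfire f t u = z u + arrs G f t u := by
  intro t
  induction t with
  | zero => simp [nfire, arrs, confSeq]
  | succ t ih =>
      have h1 : confSeq G z f (t + 1) u + (if f t = u then G.degree u else 0)
          = confSeq G z f t u + (if G.Adj (f t) u then 1 else 0) := by
        rw [confSeq_succ]
        exact step_balance G _ (f t) u (hleg t)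
      have ht : t ∉ (Finset.range t).filter (fun k => f k = u) := by simp
      have ht' : t ∉ (Finset.range t).filter (fun k => G.Adj (f k) u) := by simp
      have h2 : nfire f (t + 1) u = nfire f t u + (if f t = u then 1 else 0) := by
        unfold nfire
        rw [Finset.range_add_one, Finset.filter_insert]
        by_cases hft : f t = u
        · rw [if_pos hft, Finset.card_insert_of_notMem ht, if_pos hft]
        · rw [if_neg hft, if_neg hft, add_zero]
      have h3 : arrs G f (t + 1) u = arrs G f t u + (if G.Adj (f t) u then 1 else 0) := by
        unfold arrs
        rw [Finset.range_add_one, Finset.filter_insert]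
        by_cases hft : G.Adj (f t) u
        · rw [if_pos hft, Finset.card_insert_of_notMem ht', if_pos hft]
        · rw [if_neg hft, if_neg hft, add_zero]
      have hd : G.degree u * nfire f (t + 1) u
          = G.degree u * nfire f t u + (if f t = u then G.degree u else 0) := by
        rw [h2, Nat.mul_add]
        by_cases hft : f t = u <;> simp [hft]
      omega

private lemma mass (z : V → ℕ) (f : ℕ → V)
    (hleg : ∀ k, G.degree (f k) ≤ confSeq G z f k (f k))
    (K : Finset V) (hK : ∀ x, z x ≠ 0 → x ∈ K) :
    ∀ t (A : Finset V), ∑ x ∈ A, confSeq G z f t x ≤ ∑ x ∈ K, z x := by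
  intro t
  induction t with
  | zero =>
      intro A
      have h1 : ∑ x ∈ A.filter (fun x => z x ≠ 0), z x = ∑ x ∈ A, z x :=
        Finset.sum_filter_ne_zero A
      have h2 : A.filter (fun x => z x ≠ 0) ⊆ K := by
        intro x hx
        exact hK x (Finset.mem_filter.mp hx).2
      calc ∑ x ∈ A, confSeq G z f 0 x = ∑ x ∈ A, z x := rfl
        _ = ∑ x ∈ A.filter (fun x => z x ≠ 0), z x := h1.symm
        _ ≤ ∑ x ∈ K, z x := Finset.sum_le_sum_of_subset h2
  | succ t ih =>
      intro A
      set i := f t with hi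
      set B := insert i (A ∪ G.neighborFinset i) with hB
      have hAB : A ⊆ B := fun x hx =>
        Finset.mem_insert_of_mem (Finset.mem_union_left _ hx)
      have hiB : i ∈ B := Finset.mem_insert_self _ _
      have hnB : G.neighborFinset i ⊆ B := fun x hx =>
        Finset.mem_insert_of_mem (Finset.mem_union_right _ hx)
      have hsum : ∑ x ∈ B, (confSeq G z f (t + 1) x + (if i = x then G.degree x else 0))
          = ∑ x ∈ B, (confSeq G z f t x + (if G.Adj i x then 1 else 0)) := by
        apply Finset.sum_congr rfl
        intro x _
        rw [confSeq_succ]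
        exact step_balance G _ i x (hleg t)
      rw [Finset.sum_add_distrib, Finset.sum_add_distrib] at hsum
      have e1 : ∑ x ∈ B, (if i = x then G.degree x else 0) = G.degree i := by
        rw [Finset.sum_ite_eq B i (fun x => G.degree x), if_pos hiB]
      have e2 : ∑ x ∈ B, (if G.Adj i x then 1 else 0) = G.degree i := by
        have hfe : B.filter (fun x => G.Adj i x) = G.neighborFinset i := by
          ext x
          simp only [Finset.mem_filter, SimpleGraph.mem_neighborFinset]
          exact ⟨fun h => h.2, fun h => ⟨hnB ((SimpleGraph.mem_neighborFinset G i x).mpr h), h⟩⟩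
        have hbo : ∑ x ∈ B, (if G.Adj i x then (1 : ℕ) else 0)
            = (B.filter (fun x => G.Adj i x)).card := by
          simp [Finset.sum_boole]
        rw [hbo, hfe]
        rfl
      have key : ∑ x ∈ B, confSeq G z f (t + 1) x = ∑ x ∈ B, confSeq G z f t x := by
        omega
      calc ∑ x ∈ A, confSeq G z f (t + 1) x
          ≤ ∑ x ∈ B, confSeq G z f (t + 1) x := Finset.sum_le_sum_of_subset hAB
        _ = ∑ x ∈ B, confSeq G z f t x := key
        _ ≤ ∑ x ∈ K, z x := ih B

private lemma fired_card_bound (z : V → ℕ) (f : ℕ → V)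
    (hleg : ∀ k, G.degree (f k) ≤ confSeq G z f k (f k))
    (K : Finset V) (hK : ∀ x, z x ≠ 0 → x ∈ K)
    (hdeg : ∀ x, 0 < G.degree x) :
    ∀ T, ((Finset.range T).image f).card ≤ (∑ x ∈ K, z x) + K.card := by
  classical
  intro T
  match T with
  | 0 => simp
  | T + 1 =>
    set N := ∑ x ∈ K, z x with hN
    set S := (Finset.range (T + 1)).image f with hS
    set τ : V → ℕ := fun x => Nat.findGreatest (fun k => f k = x) T with hτdef
    have hmemS : ∀ x, x ∈ S → ∃ k, k < T + 1 ∧ f k = x := by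
      intro x hx
      rw [hS] at hx
      obtain ⟨k, hk, hfk⟩ := Finset.mem_image.mp hx
      exact ⟨k, Finset.mem_range.mp hk, hfk⟩
    have hmemS' : ∀ k, k < T + 1 → f k ∈ S := by
      intro k hk
      rw [hS]
      exact Finset.mem_image_of_mem f (Finset.mem_range.mpr hk)
    have hτ_fire : ∀ x ∈ S, f (τ x) = x := by
      intro x hx
      obtain ⟨k, hk, hfk⟩ := hmemS x hx
      simp only [hτdef]
      exact Nat.findGreatest_spec (P := fun k => f k = x) (Nat.lt_succ_iff.mp hk) hfk
    have hτ_le : ∀ x, τ x ≤ T := by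
      intro x
      simp only [hτdef]
      exact Nat.findGreatest_le (P := fun k => f k = x) T
    have hτ_max : ∀ x k, k ≤ T → f k = x → k ≤ τ x := by
      intro x k hk hfk
      simp only [hτdef]
      exact Nat.le_findGreatest hk hfk
    set Y : V → Finset V := fun w => S.filter (fun y => G.Adj w y ∧ τ w < τ y) with hYdef
    -- retention: each edge counted at its earlier-last-fired endpoint leaves a chip
    have hret : ∀ w ∈ S, (Y w).card ≤ confSeq G z f (T + 1) w := by
      intro w hw
      set s := τ w + 1 with hsdef
      have hsT : s ≤ T + 1 := Nat.succ_le_succ (hτ_le w)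
      set A := (Finset.Ico s (T + 1)).filter (fun k => G.Adj (f k) w) with hAdef
      have hYA : (Y w).card ≤ A.card := by
        apply Finset.card_le_card_of_injOn (fun y => τ y)
        · intro y hy
          rw [hYdef] at hy
          simp only [Finset.mem_coe, Finset.mem_filter] at hy
          obtain ⟨hyS, hadj, hlt⟩ := hy
          rw [hAdef]
          simp only [Finset.mem_coe, Finset.mem_filter, Finset.mem_Ico]
          refine ⟨⟨hlt, Nat.lt_succ_of_le (hτ_le y)⟩, ?_⟩
          rw [hτ_fire y hyS]
          exact hadj.symm
        · intro y hy y' hy' hee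
          have hee' : τ y = τ y' := hee
          have h1 : f (τ y) = y := hτ_fire y (Finset.mem_filter.mp (Finset.mem_coe.mp hy)).1
          have h2 : f (τ y') = y' := hτ_fire y' (Finset.mem_filter.mp (Finset.mem_coe.mp hy')).1
          rw [← h1, ← h2, hee']
      have hb1 := balance G z f hleg w (T + 1)
      have hb2 := balance G z f hleg w s
      have hnn : nfire f (T + 1) w = nfire f s w := by
        unfold nfire
        congr 1
        ext k
        simp only [Finset.mem_filter, Finset.mem_range]
        constructor
        · rintro ⟨hk, hfk⟩
          exact ⟨Nat.lt_succ_of_le (hτ_max w k (Nat.lt_succ_iff.mp hk) hfk), hfk⟩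
        · rintro ⟨hk, hfk⟩
          exact ⟨lt_of_lt_of_le hk hsT, hfk⟩
      have harr : arrs G f (T + 1) w = arrs G f s w + A.card := by
        unfold arrs
        have hsplit : Finset.range (T + 1) = Finset.Ico 0 s ∪ Finset.Ico s (T + 1) := by
          rw [Finset.range_eq_Ico, Finset.Ico_union_Ico_eq_Ico (Nat.zero_le s) hsT]
        have hdisj : Disjoint ((Finset.Ico 0 s).filter (fun k => G.Adj (f k) w))
            ((Finset.Ico s (T + 1)).filter (fun k => G.Adj (f k) w)) :=
          Finset.disjoint_filter_filter (Finset.Ico_disjoint_Ico_consecutive 0 s (T + 1))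
        rw [hsplit, Finset.filter_union, Finset.card_union_of_disjoint hdisj, hAdef,
          ← Finset.range_eq_Ico]
      rw [hnn] at hb1
      omega
    have hsumY : ∑ w ∈ S, (Y w).card ≤ N := by
      calc ∑ w ∈ S, (Y w).card ≤ ∑ w ∈ S, confSeq G z f (T + 1) w :=
            Finset.sum_le_sum (fun w hw => hret w hw)
        _ ≤ N := mass G z f hleg K hK (T + 1) S
    set TGT := S.biUnion (fun w => (Y w).image (fun y => (w, y))) with hTGTdef
    have hTGT : TGT.card ≤ N := by
      calc TGT.card ≤ ∑ w ∈ S, ((Y w).image (fun y => (w, y))).card :=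
            Finset.card_biUnion_le
        _ ≤ ∑ w ∈ S, (Y w).card := Finset.sum_le_sum (fun w _ => Finset.card_image_le)
        _ ≤ N := hsumY
    -- first-firing time and feeder
    set σ : V → ℕ := fun x => sInf {k | f k = x} with hσdef
    set yf : V → V := fun x => f (sInf {j | j < σ x ∧ G.Adj (f j) x}) with hyfdef
    have hσS : ∀ x ∈ S, f (σ x) = x ∧ σ x < T + 1 ∧ ∀ k < σ x, f k ≠ x := by
      intro x hx
      obtain ⟨k, hk, hfk⟩ := hmemS x hx
      have hne : {m | f m = x}.Nonempty := ⟨k, hfk⟩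
      simp only [hσdef]
      exact ⟨Nat.sInf_mem hne, lt_of_le_of_lt (Nat.sInf_le hfk) hk,
        fun m hm => Nat.notMem_of_lt_sInf hm⟩
    have hfeed : ∀ x, x ∈ S → z x = 0 → ∃ j, j < σ x ∧ G.Adj (f j) x := by
      intro x hx hzx
      obtain ⟨hfσ, hσT, hmin⟩ := hσS x hx
      have hb := balance G z f hleg x (σ x)
      have hn0 : nfire f (σ x) x = 0 := by
        unfold nfire
        rw [Finset.card_eq_zero, Finset.filter_eq_empty_iff]
        intro k hk
        exact hmin k (Finset.mem_range.mp hk)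
      have hlegσ := hleg (σ x)
      rw [hfσ] at hlegσ
      have harrpos : 0 < arrs G f (σ x) x := by
        have := hdeg x
        omega
      unfold arrs at harrpos
      obtain ⟨j, hj⟩ := Finset.card_pos.mp harrpos
      simp only [Finset.mem_filter, Finset.mem_range] at hj
      exact ⟨j, hj.1, hj.2⟩
    have hyfS : ∀ x, x ∈ S → z x = 0 →
        G.Adj x (yf x) ∧ yf x ∈ S ∧ ∃ j, j < σ x ∧ f j = yf x := by
      intro x hx hzx
      have hne : {j | j < σ x ∧ G.Adj (f j) x}.Nonempty := hfeed x hx hzx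
      have hspec : sInf {j | j < σ x ∧ G.Adj (f j) x} ∈ {j | j < σ x ∧ G.Adj (f j) x} :=
        Nat.sInf_mem hne
      obtain ⟨hjlt, hjadj⟩ := hspec
      have hσT : σ x < T + 1 := (hσS x hx).2.1
      simp only [hyfdef]
      exact ⟨hjadj.symm, hmemS' _ (lt_trans hjlt hσT), ⟨_, hjlt, rfl⟩⟩
    -- the injection from S \ K into TGT
    have hDT : (S \ K).card ≤ TGT.card := by
      have hz0 : ∀ x ∈ S \ K, z x = 0 := by
        intro x hx
        have := (Finset.mem_sdiff.mp hx).2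
        by_contra hne
        exact this (hK x hne)
      have hSx : ∀ x ∈ S \ K, x ∈ S := fun x hx => (Finset.mem_sdiff.mp hx).1
      -- cross-minimality
      have hcross : ∀ x x', x ∈ S \ K → x' ∈ S \ K → yf x = x' → σ x' < σ x := by
        intro x x' hx hx' hyx
        obtain ⟨_, _, j, hjlt, hjf⟩ := hyfS x (hSx x hx) (hz0 x hx)
        have hle : σ x' ≤ j := by
          simp only [hσdef]
          exact Nat.sInf_le (show f j = x' by rw [hjf, hyx])
        omega
      have hτne : ∀ x, x ∈ S \ K → τ x ≠ τ (yf x) := by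
        intro x hx heq
        obtain ⟨hadj, hyS, _⟩ := hyfS x (hSx x hx) (hz0 x hx)
        have h1 : f (τ x) = x := hτ_fire x (hSx x hx)
        have h2 : f (τ (yf x)) = yf x := hτ_fire _ hyS
        rw [heq, h2] at h1
        exact hadj.ne h1.symm
      apply Finset.card_le_card_of_injOn
        (fun x => if τ x < τ (yf x) then (x, yf x) else (yf x, x))
      · intro x hx
        obtain ⟨hadj, hyS, _⟩ := hyfS x (hSx x hx) (hz0 x hx)
        by_cases hcmp : τ x < τ (yf x)
        · simp only [Finset.mem_coe]
          rw [if_pos hcmp, hTGTdef]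
          rw [Finset.mem_biUnion]
          refine ⟨x, hSx x hx, ?_⟩
          apply Finset.mem_image_of_mem
          rw [hYdef]
          simp only [Finset.mem_filter]
          exact ⟨hyS, hadj, hcmp⟩
        · simp only [Finset.mem_coe]
          rw [if_neg hcmp, hTGTdef]
          rw [Finset.mem_biUnion]
          refine ⟨yf x, hyS, ?_⟩
          apply Finset.mem_image_of_mem
          rw [hYdef]
          simp only [Finset.mem_filter]
          refine ⟨hSx x hx, hadj.symm, ?_⟩
          have := hτne x hx
          omega
      · intro x hx0 x' hx0' heq
        have hx := Finset.mem_coe.mp hx0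
        have hx' := Finset.mem_coe.mp hx0'
        have heq : (if τ x < τ (yf x) then (x, yf x) else (yf x, x))
            = (if τ x' < τ (yf x') then (x', yf x') else (yf x', x')) := heq
        by_cases h1 : τ x < τ (yf x) <;> by_cases h2 : τ x' < τ (yf x')
        · rw [if_pos h1, if_pos h2, Prod.mk.injEq] at heq
          exact heq.1
        · rw [if_pos h1, if_neg h2, Prod.mk.injEq] at heq
          obtain ⟨ha, hb⟩ := heq
          have c1 := hcross x x' hx hx' (by rw [hb])
          have c2 := hcross x' x hx' hx (by rw [← ha])
          omega
        · rw [if_neg h1, if_pos h2, Prod.mk.injEq] at heq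
          obtain ⟨ha, hb⟩ := heq
          have c1 := hcross x x' hx hx' (by rw [ha])
          have c2 := hcross x' x hx' hx (by rw [← hb])
          omega
        · rw [if_neg h1, if_neg h2, Prod.mk.injEq] at heq
          exact heq.2
    calc S.card ≤ (S \ K).card + K.card := Finset.card_le_card_sdiff_add_card
      _ ≤ N + K.card := by
          have := hDT
          have := hTGT
          omega

end SandpileAux

/-- On an infinite, connected, locally finite simple graph, every legal toppling
sequence from a configuration with finitely many particles is finite: there is
no infinite legal toppling sequence, so all vertices become stable after a
finite number of topplings. -/
theorem no_infinite_toppling_of_finite_support [Infinite V] [DecidableEq V]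
    (G : SimpleGraph V) [G.LocallyFinite] [DecidableRel G.Adj]
    (hconn : G.Connected) (z : V → ℕ) (hz : (Function.support z).Finite) :
    ¬ ∃ f : ℕ → V, ∀ k, G.degree (f k) ≤ confSeq G z f k (f k) := by
  classical
  rintro ⟨f, hleg⟩
  set K := hz.toFinset with hKdef
  have hK : ∀ x, z x ≠ 0 → x ∈ K := fun x hx => hz.mem_toFinset.mpr hx
  -- no isolated vertices
  have hadj : ∀ x : V, ∃ y, G.Adj x y := by
    intro x
    obtain ⟨u, hu⟩ := exists_ne x
    obtain ⟨w⟩ := hconn.preconnected x u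
    cases w with
    | nil => exact absurd rfl hu
    | cons h p => exact ⟨_, h⟩
  have hdeg : ∀ x : V, 0 < G.degree x := by
    intro x
    rw [SimpleGraph.degree_pos_iff_exists_adj]
    exact hadj x
  set B := (∑ x ∈ K, z x) + K.card with hBdef
  have hcard : ∀ T, ((Finset.range T).image f).card ≤ B :=
    fired_card_bound G z f hleg K hK hdeg
  -- a maximal fired set
  have hmax : ∃ T0, ∀ T, ((Finset.range T).image f).card ≤ ((Finset.range T0).image f).card := by
    by_contra h
    push_neg at h
    have grow : ∀ m : ℕ, ∃ T, m ≤ ((Finset.range T).image f).card := by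
      intro m
      induction m with
      | zero => exact ⟨0, Nat.zero_le _⟩
      | succ m ih =>
          obtain ⟨T, hT⟩ := ih
          obtain ⟨T', hT'⟩ := h T
          exact ⟨T', by omega⟩
    obtain ⟨T, hT⟩ := grow (B + 1)
    have := hcard T
    omega
  obtain ⟨T0, hT0⟩ := hmax
  set Sstar := (Finset.range T0).image f with hSs
  have hall : ∀ k, f k ∈ Sstar := by
    intro k
    have hsub : Sstar ⊆ (Finset.range (max T0 (k + 1))).image f := by
      apply Finset.image_subset_image
      exact Finset.range_subset_range.mpr (le_max_left _ _)
    have heq : Sstar = (Finset.range (max T0 (k + 1))).image f :=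
      Finset.eq_of_subset_of_card_le hsub (hT0 _)
    have hmem : f k ∈ (Finset.range (max T0 (k + 1))).image f :=
      Finset.mem_image_of_mem f (Finset.mem_range.mpr
        (lt_of_lt_of_le (Nat.lt_succ_self k) (le_max_right _ _)))
    rw [heq]
    exact hmem
  -- pigeonhole : some vertex fires infinitely often
  have hpig : ∃ x, {k : ℕ | f k = x}.Infinite := by
    by_contra h
    push_neg at h
    have hfin : ∀ x, {k : ℕ | f k = x}.Finite := fun x => h x
    have huniv : (Set.univ : Set ℕ).Finite := by
      apply Set.Finite.subset (Set.Finite.biUnion (Sstar.finite_toSet) (fun x _ => hfin x))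
      intro k _
      simp only [Set.mem_iUnion]
      exact ⟨f k, hall k, rfl⟩
    exact Set.infinite_univ huniv
  obtain ⟨x0, hx0⟩ := hpig
  -- unbounded firing counts, spreading along edges
  have hx0U : ∀ m, ∃ t, m ≤ nfire f t x0 := by
    intro m
    obtain ⟨F, hFsub, hFcard⟩ := hx0.exists_subset_card_eq m
    rcases Finset.eq_empty_or_nonempty F with hF | hF
    · refine ⟨0, ?_⟩
      rw [hF] at hFcard
      simp at hFcard
      omega
    · refine ⟨F.max' hF + 1, ?_⟩
      have hsub : F ⊆ (Finset.range (F.max' hF + 1)).filter (fun k => f k = x0) := by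
        intro k hk
        simp only [Finset.mem_filter, Finset.mem_range]
        exact ⟨Nat.lt_succ_of_le (F.le_max' k hk), hFsub hk⟩
      calc m = F.card := hFcard.symm
        _ ≤ _ := Finset.card_le_card hsub
  have hstep : ∀ a b, G.Adj a b → (∀ m, ∃ t, m ≤ nfire f t a) →
      (∀ m, ∃ t, m ≤ nfire f t b) := by
    intro a b hab ha m
    obtain ⟨t, ht⟩ := ha ((∑ x ∈ K, z x) + G.degree b * m)
    have hb := balance G z f hleg b t
    have harr : nfire f t a ≤ arrs G f t b := by
      apply Finset.card_le_card
      intro k hk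
      simp only [Finset.mem_filter, Finset.mem_range] at hk ⊢
      exact ⟨hk.1, by rw [hk.2]; exact hab⟩
    have hZb : confSeq G z f t b ≤ ∑ x ∈ K, z x := by
      have h := mass G z f hleg K hK t {b}
      simpa using h
    have hmul : G.degree b * m ≤ G.degree b * nfire f t b := by omega
    exact ⟨t, Nat.le_of_mul_le_mul_left hmul (hdeg b)⟩
  have hreach : ∀ (v u : V) (w : G.Walk v u),
      (∀ m, ∃ t, m ≤ nfire f t v) → (∀ m, ∃ t, m ≤ nfire f t u) := by
    intro v u w
    induction w with
    | nil => exact id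
    | cons h p ih => exact fun hv => ih (hstep _ _ h hv)
  have hallU : ∀ u : V, ∀ m, ∃ t, m ≤ nfire f t u := by
    intro u
    obtain ⟨w⟩ := hconn.preconnected x0 u
    exact hreach x0 u w hx0U
  -- every vertex fires at least once, so V ⊆ Sstar, contradicting V infinite
  have hVfin : (Set.univ : Set V).Finite := by
    apply Set.Finite.subset Sstar.finite_toSet
    intro v _
    obtain ⟨t, ht⟩ := hallU v 1
    have hpos : 0 < ((Finset.range t).filter (fun k => f k = v)).card := ht
    obtain ⟨k, hk⟩ := Finset.card_pos.mp hpos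
    simp only [Finset.mem_filter, Finset.mem_range] at hk
    rw [← hk.2]
    exact hall k
  exact Set.infinite_univ hVfin
end
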